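/- Fix a real number t with |t| < 2. Then the limit, as the real parameter c tends to +∞, of √c · ρ_c(√c · t) equals (1/(2π))·√(4 - t²); that is, the suitably rescaled Kesten–McKay densities converge pointwise on (-2, 2) to the density of the semicircle law. -/

import Mathlib

/-- The Kesten–McKay density `ρ_c`, extended by zero outside `[-2√c, 2√c]`. -/
noncomputable def kestenMcKayDensity (c t : ℝ) : ℝ :=
  if |t| ≤ 2 * Real.sqrt c then
    (1 + c) / (2 * Real.pi) * Real.sqrt (4 * c - t ^ 2) / ((1 + c) ^ 2 - t ^ 2)
  else 0

/-- For fixed `t` with `|t| < 2`, as `c → ∞` the rescaled Kesten–McKay densities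
`√c · ρ_c(√c · t)` converge to the semicircle density `(1/(2π))√(4 - t²)`. -/
theorem stmt_15 (t : ℝ) (ht : |t| < 2) :
    Filter.Tendsto
      (fun c : ℝ => Real.sqrt c * kestenMcKayDensity c (Real.sqrt c * t))
      Filter.atTop (nhds (1 / (2 * Real.pi) * Real.sqrt (4 - t ^ 2))) := by
  have hπ : (2 * Real.pi) ≠ 0 := by positivity
  have ht2 : t ^ 2 < 4 := by nlinarith [sq_abs t, abs_nonneg t]
  have h1 : Filter.Tendsto (fun c : ℝ => c⁻¹) Filter.atTop (nhds 0) :=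
    tendsto_inv_atTop_zero
  have hnum : Filter.Tendsto (fun c : ℝ => 1 + c⁻¹) Filter.atTop (nhds 1) := by
    simpa using tendsto_const_nhds.add h1
  have hden : Filter.Tendsto (fun c : ℝ => 1 + (2 - t ^ 2) * c⁻¹ + c⁻¹ * c⁻¹)
      Filter.atTop (nhds 1) := by
    have := ((h1.const_mul (2 - t ^ 2)).const_add 1).add (h1.mul h1)
    simpa using this
  have hrat : Filter.Tendsto
      (fun c : ℝ => (1 + c⁻¹) / (1 + (2 - t ^ 2) * c⁻¹ + c⁻¹ * c⁻¹))
      Filter.atTop (nhds 1) := by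
    simpa [Pi.div_def] using hnum.div hden one_ne_zero
  have hmain := hrat.const_mul (1 / (2 * Real.pi) * Real.sqrt (4 - t ^ 2))
  rw [mul_one] at hmain
  refine Filter.Tendsto.congr' ?_ hmain
  filter_upwards [Filter.eventually_ge_atTop 1] with c hc
  have hc0 : (0 : ℝ) < c := lt_of_lt_of_le one_pos hc
  have hs : Real.sqrt c * Real.sqrt c = c := Real.mul_self_sqrt hc0.le
  have habs : |Real.sqrt c * t| ≤ 2 * Real.sqrt c := by
    rw [abs_mul, abs_of_nonneg (Real.sqrt_nonneg c)]
    calc Real.sqrt c * |t| ≤ Real.sqrt c * 2 := by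
          exact mul_le_mul_of_nonneg_left ht.le (Real.sqrt_nonneg c)
      _ = 2 * Real.sqrt c := mul_comm _ _
  have hsq : (Real.sqrt c * t) ^ 2 = c * t ^ 2 := by
    rw [mul_pow, Real.sq_sqrt hc0.le]
  have hsqrt : Real.sqrt (4 * c - (Real.sqrt c * t) ^ 2)
      = Real.sqrt c * Real.sqrt (4 - t ^ 2) := by
    rw [hsq, ← Real.sqrt_mul hc0.le]
    ring_nf
  have hD : (0 : ℝ) < (1 + c) ^ 2 - c * t ^ 2 := by nlinarith
  have hden0 : 1 + (2 - t ^ 2) * c⁻¹ + c⁻¹ * c⁻¹ ≠ 0 := by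
    have : 1 + (2 - t ^ 2) * c⁻¹ + c⁻¹ * c⁻¹ = ((1 + c) ^ 2 - c * t ^ 2) / (c * c) := by
      field_simp; ring
    rw [this]
    positivity
  have hD' : (1 + c) ^ 2 - c * t ^ 2 ≠ 0 := ne_of_gt hD
  have hfrac : (1 + c⁻¹) / (1 + (2 - t ^ 2) * c⁻¹ + c⁻¹ * c⁻¹)
      = (c * (1 + c)) / ((1 + c) ^ 2 - c * t ^ 2) := by
    rw [div_eq_div_iff hden0 hD']
    field_simp
    ring
  simp only [kestenMcKayDensity, if_pos habs]
  rw [hsqrt, hsq, hfrac]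
  rw [show Real.sqrt c * ((1 + c) / (2 * Real.pi) * (Real.sqrt c * Real.sqrt (4 - t ^ 2)) /
        ((1 + c) ^ 2 - c * t ^ 2))
      = (Real.sqrt c * Real.sqrt c) * ((1 + c) / (2 * Real.pi) * Real.sqrt (4 - t ^ 2) /
        ((1 + c) ^ 2 - c * t ^ 2)) from by ring, hs]
  field_simp
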